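/- With the setup below, for every p ∈ [1, ∞) and every u ∈ L^p(ℝⁿ), the function v(x) = ∫_{ℝⁿ} u(x − λρ(x)y) φ(y) dy is defined for almost every x and satisfies ‖v‖_{L^p(ℝⁿ)} ≤ 2^{1/p} ‖u‖_{L^p(ℝⁿ)}. -/

import Mathlib

open MeasureTheory ENNReal
set_option maxHeartbeats 1000000

lemma det_id_sub_smulRight {n : ℕ} (f : EuclideanSpace ℝ (Fin n) →L[ℝ] ℝ)
    (y : EuclideanSpace ℝ (Fin n)) :
    (ContinuousLinearMap.id ℝ (EuclideanSpace ℝ (Fin n)) - f.smulRight y).det = 1 - f y := by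
  classical
  set b := (EuclideanSpace.basisFun (Fin n) ℝ).toBasis with hb
  have hdet : (ContinuousLinearMap.id ℝ (EuclideanSpace ℝ (Fin n)) - f.smulRight y).det
      = LinearMap.det ((ContinuousLinearMap.id ℝ (EuclideanSpace ℝ (Fin n))
          - f.smulRight y) : EuclideanSpace ℝ (Fin n) →ₗ[ℝ] EuclideanSpace ℝ (Fin n)) := rfl
  rw [hdet, ← LinearMap.det_toMatrix b]
  have hmat : (LinearMap.toMatrix b b) ((ContinuousLinearMap.id ℝ (EuclideanSpace ℝ (Fin n))
          - f.smulRight y) : EuclideanSpace ℝ (Fin n) →ₗ[ℝ] EuclideanSpace ℝ (Fin n))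
      = 1 - Matrix.replicateCol Unit (fun i => y i) * Matrix.replicateRow Unit (fun j => f (b j)) := by
    ext i j
    simp [LinearMap.toMatrix_apply, Matrix.mul_apply, Matrix.one_apply,
      Matrix.sub_apply, Matrix.replicateCol, Matrix.replicateRow, b,
      ContinuousLinearMap.smulRight_apply, mul_comm]
  rw [hmat, Matrix.det_one_sub_mul_comm, Matrix.det_unique]
  have : f y = ∑ j, y j * f (b j) := by
    conv_lhs => rw [← b.sum_repr y]
    simp [b, mul_comm]
  simp [Matrix.sub_apply, Matrix.mul_apply, Matrix.one_apply, Matrix.replicateRow, Matrix.replicateCol, this]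
  exact Finset.sum_congr rfl fun i _ => mul_comm _ _
lemma cov_bound {n : ℕ} {C₀ lam : ℝ} {ρ : EuclideanSpace ℝ (Fin n) → ℝ}
    (hρ : ContDiff ℝ 1 ρ)
    (hgrad : ∀ x, ‖gradient ρ x‖ ≤ C₀)
    (hlam : 0 < lam) (hlamC : lam * C₀ ≤ 1 / 2)
    {y : EuclideanSpace ℝ (Fin n)} (hy : ‖y‖ ≤ 1)
    (g : EuclideanSpace ℝ (Fin n) → ℝ≥0∞) :
    ∫⁻ x, g (x - (lam * ρ x) • y) ≤ 2 * ∫⁻ z, g z := by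
  have hC₀ : 0 ≤ C₀ := le_trans (norm_nonneg _) (hgrad 0)
  have hdiff : Differentiable ℝ ρ := hρ.differentiable one_ne_zero
  have hfd : ∀ x, ‖fderiv ℝ ρ x‖ = ‖gradient ρ x‖ := by
    intro x
    have h : fderiv ℝ ρ x = (InnerProductSpace.toDual ℝ _) (gradient ρ x) := by
      simp [gradient]
    rw [h]
    exact (InnerProductSpace.toDual ℝ _).norm_map _
  have hlip : ∀ x x' : EuclideanSpace ℝ (Fin n), |ρ x - ρ x'| ≤ C₀ * ‖x - x'‖ := by
    intro x x'
    have := (convex_univ (𝕜 := ℝ) (E := EuclideanSpace ℝ (Fin n))).norm_image_sub_le_of_norm_fderiv_le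
      (fun z _ => hdiff z) (fun z _ => by rw [hfd z]; exact hgrad z)
      (Set.mem_univ x') (Set.mem_univ x)
    simpa [Real.norm_eq_abs] using this
  set Φ : EuclideanSpace ℝ (Fin n) → EuclideanSpace ℝ (Fin n) :=
    fun x => x - (lam * ρ x) • y with hΦ
  set g₀ : EuclideanSpace ℝ (Fin n) → EuclideanSpace ℝ (Fin n) :=
    fun x => (lam * ρ x) • y with hg₀
  have hg₀lip : ∀ x x', ‖g₀ x - g₀ x'‖ ≤ (1/2) * ‖x - x'‖ := by
    intro x x'
    have h : g₀ x - g₀ x' = (lam * ρ x - lam * ρ x') • y := by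
      simp [hg₀, sub_smul]
    rw [h, norm_smul, Real.norm_eq_abs, ← mul_sub, abs_mul, abs_of_pos hlam]
    have h1 : |ρ x - ρ x'| ≤ C₀ * ‖x - x'‖ := hlip x x'
    nlinarith [norm_nonneg (x - x'), norm_nonneg y, abs_nonneg (ρ x - ρ x'),
      mul_le_mul_of_nonneg_left h1 hlam.le,
      mul_le_mul_of_nonneg_left hy (mul_nonneg hlam.le (abs_nonneg (ρ x - ρ x')))]
  have hinj : Function.Injective Φ := by
    intro x x' h
    have h1 : x - x' = g₀ x - g₀ x' := by
      rw [sub_eq_sub_iff_sub_eq_sub]; exact h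
    have h2 : ‖x - x'‖ ≤ (1/2) * ‖x - x'‖ := by
      conv_lhs => rw [h1]
      exact hg₀lip x x'
    have h3 : ‖x - x'‖ = 0 := by nlinarith [norm_nonneg (x - x')]
    exact sub_eq_zero.mp (norm_eq_zero.mp h3)
  have hsurj : Function.Surjective Φ := by
    intro w
    have hlipg : LipschitzWith ⟨1/2, by norm_num⟩ (fun z => w + g₀ z) :=
      LipschitzWith.of_dist_le_mul (by
        intro x x'
        simp only [dist_add_left, dist_eq_norm]
        rw [add_sub_add_left_eq_sub]; exact hg₀lip x x')
    have hT : ContractingWith ⟨1/2, by norm_num⟩ (fun z => w + g₀ z) :=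
      ⟨by show (1/2 : ℝ) < 1; norm_num, hlipg⟩
    have hz : w + g₀ (ContractingWith.fixedPoint _ hT) = ContractingWith.fixedPoint _ hT :=
      ContractingWith.fixedPoint_isFixedPt hT
    refine ⟨ContractingWith.fixedPoint _ hT, ?_⟩
    have habel : ∀ a b : EuclideanSpace ℝ (Fin n), w + a = b → b - a = w := by
      intro a b h; rw [← h]; abel
    exact habel _ _ hz
  -- derivative
  set Φ' : EuclideanSpace ℝ (Fin n) → (EuclideanSpace ℝ (Fin n) →L[ℝ] EuclideanSpace ℝ (Fin n)) :=
    fun x => ContinuousLinearMap.id ℝ _ - ((lam • fderiv ℝ ρ x).smulRight y) with hΦ'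
  have hderiv : ∀ x, HasFDerivAt Φ (Φ' x) x := by
    intro x
    have h1 : HasFDerivAt (fun x => lam * ρ x) (lam • fderiv ℝ ρ x) x :=
      (hdiff x).hasFDerivAt.const_mul lam
    exact (hasFDerivAt_id x).sub (h1.smul_const y)
  have hdet : ∀ x, (1:ℝ)/2 ≤ (Φ' x).det := by
    intro x
    rw [hΦ', det_id_sub_smulRight]
    have h1 : |fderiv ℝ ρ x y| ≤ C₀ := by
      calc |fderiv ℝ ρ x y| ≤ ‖fderiv ℝ ρ x‖ * ‖y‖ := (fderiv ℝ ρ x).le_opNorm y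
        _ ≤ C₀ * 1 := mul_le_mul (by rw [hfd x]; exact hgrad x) hy (norm_nonneg _)
            (le_trans (norm_nonneg _) (by rw [hfd x]; exact hgrad x))
        _ = C₀ := mul_one _
    have h2 : (lam • fderiv ℝ ρ x) y = lam * fderiv ℝ ρ x y := rfl
    rw [h2]
    have := abs_le.mp h1
    nlinarith
  -- change of variables
  have key := lintegral_image_eq_lintegral_abs_det_fderiv_mul (volume)
    (MeasurableSet.univ) (f' := Φ') (fun x _ => (hderiv x).hasFDerivWithinAt)
    (hinj.injOn) g
  rw [Set.image_univ, hsurj.range_eq] at key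
  simp only [Measure.restrict_univ] at key
  have hlower : ∀ x, (1:ℝ≥0∞)/2 * g (Φ x) ≤ ENNReal.ofReal |(Φ' x).det| * g (Φ x) := by
    intro x
    apply mul_le_mul_left
    rw [show ((1:ℝ≥0∞)/2) = ENNReal.ofReal (1/2) by
      rw [ENNReal.ofReal_div_of_pos] <;> norm_num]
    exact ENNReal.ofReal_le_ofReal (le_trans (hdet x) (le_abs_self _))
  have h5 : (1:ℝ≥0∞)/2 * ∫⁻ x, g (Φ x) ≤ ∫⁻ z, g z := by
    rw [key, ← lintegral_const_mul' _ _ (by norm_num : (1:ℝ≥0∞)/2 ≠ ⊤)]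
    exact lintegral_mono hlower
  calc ∫⁻ x, g (Φ x) = 2 * ((1:ℝ≥0∞)/2 * ∫⁻ x, g (Φ x)) := by
        rw [← mul_assoc, ENNReal.mul_div_cancel' (by norm_num) (by norm_num), one_mul]
    _ ≤ 2 * ∫⁻ z, g z := by
        exact mul_le_mul_right h5 2
lemma holder_aux {α : Type*} [MeasurableSpace α] {μ : Measure α} {p : ℝ} (hp : 1 ≤ p)
    {f G : α → ℝ≥0∞} (hf : AEMeasurable f μ) (hG : AEMeasurable G μ)
    (hG1 : ∫⁻ a, G a ∂μ = 1) :
    ∫⁻ a, f a * G a ∂μ ≤ (∫⁻ a, f a ^ p * G a ∂μ) ^ (1/p) := by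
  rcases eq_or_lt_of_le hp with h1 | h1
  · simp [← h1]
  have hp0 : 0 < p := lt_trans one_pos h1
  set q := Real.conjExponent p with hq
  have hpq : p.HolderConjugate q := Real.HolderConjugate.conjExponent h1
  have hq0 : 0 < q := hpq.symm.pos
  have key := ENNReal.lintegral_mul_le_Lp_mul_Lq μ hpq
    (f := fun a => f a * G a ^ (1/p)) (g := fun a => G a ^ (1/q))
    (hf.mul (hG.pow_const _)) (hG.pow_const _)
  have e1 : ∀ a, f a * G a = (f a * G a ^ (1/p)) * G a ^ (1/q) := by
    intro a
    rw [mul_assoc, ← ENNReal.rpow_add_of_nonneg _ _ (by positivity) (by positivity),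
      show 1/p + 1/q = 1 by rw [one_div, one_div]; exact hpq.inv_add_inv_eq_inv.trans inv_one,
      ENNReal.rpow_one]
  have e2 : ∀ a, (f a * G a ^ (1/p)) ^ p = f a ^ p * G a := by
    intro a
    rw [ENNReal.mul_rpow_of_nonneg _ _ hp0.le, ← ENNReal.rpow_mul,
      one_div_mul_cancel hp0.ne', ENNReal.rpow_one]
  have e3 : ∀ a, (G a ^ (1/q)) ^ q = G a := by
    intro a
    rw [← ENNReal.rpow_mul, one_div_mul_cancel hq0.ne', ENNReal.rpow_one]
  calc ∫⁻ a, f a * G a ∂μ = ∫⁻ a, (f a * G a ^ (1/p)) * G a ^ (1/q) ∂μ := by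
        simp_rw [e1]
    _ ≤ (∫⁻ a, (f a * G a ^ (1/p)) ^ p ∂μ) ^ (1/p) * (∫⁻ a, (G a ^ (1/q)) ^ q ∂μ) ^ (1/q) :=
        key
    _ = (∫⁻ a, f a ^ p * G a ∂μ) ^ (1/p) := by
        simp_rw [e2, e3, hG1, ENNReal.one_rpow, mul_one]

theorem stmt_15 (n : ℕ) (hn : 1 ≤ n) (C₀ lam : ℝ)
    (ρ : EuclideanSpace ℝ (Fin n) → ℝ)
    (hρ : ContDiff ℝ 1 ρ) (hρ0 : ∀ x, 0 ≤ ρ x)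
    (hgrad : ∀ x, ‖gradient ρ x‖ ≤ C₀)
    (hlam : 0 < lam) (hlamC : lam * C₀ ≤ 1 / 2)
    (φ : EuclideanSpace ℝ (Fin n) → ℝ)
    (hφc : Continuous φ) (hφ0 : ∀ y, 0 ≤ φ y)
    (hφsupp : Function.support φ ⊆ Metric.closedBall 0 1)
    (hφint : ∫ y, φ y = 1)
    (p : ℝ) (hp : 1 ≤ p)
    (u : EuclideanSpace ℝ (Fin n) → ℝ)
    (hu : MemLp u (ENNReal.ofReal p) volume)
    (v : EuclideanSpace ℝ (Fin n) → ℝ)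
    (hv : ∀ x, v x = ∫ y, u (x - (lam * ρ x) • y) * φ y) :
    (∀ᵐ x : EuclideanSpace ℝ (Fin n),
        Integrable (fun y => u (x - (lam * ρ x) • y) * φ y)) ∧
      eLpNorm v (ENNReal.ofReal p) volume ≤
        ENNReal.ofReal ((2 : ℝ) ^ (1 / p)) * eLpNorm u (ENNReal.ofReal p) volume := by
  classical
  have hp0 : 0 < p := lt_of_lt_of_le one_pos hp
  have hpne : ENNReal.ofReal p ≠ 0 := by
    simp only [ne_eq, ENNReal.ofReal_eq_zero, not_le]; exact hp0
  have hptop : ENNReal.ofReal p ≠ ⊤ := ENNReal.ofReal_ne_top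
  have hpto : (ENNReal.ofReal p).toReal = p := ENNReal.toReal_ofReal hp0.le
  -- measurable representative of u
  set u' : EuclideanSpace ℝ (Fin n) → ℝ := hu.1.mk u with hu'def
  have hum : StronglyMeasurable u' := hu.1.stronglyMeasurable_mk
  have hueq : u =ᵐ[volume] u' := hu.1.ae_eq_mk
  have hu'mem : MemLp u' (ENNReal.ofReal p) volume := (memLp_congr_ae hueq).mp hu
  -- the nonnegative density G
  set G : EuclideanSpace ℝ (Fin n) → ℝ≥0∞ := fun y => ENNReal.ofReal (φ y) with hGdef
  have hGmeas : Measurable G := ENNReal.measurable_ofReal.comp hφc.measurable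
  have hφcs : HasCompactSupport φ := by
    apply HasCompactSupport.intro (isCompact_closedBall (0 : EuclideanSpace ℝ (Fin n)) 1)
    intro x hx
    by_contra h
    exact hx (hφsupp h)
  have hφi : Integrable φ volume := hφc.integrable_of_hasCompactSupport hφcs
  have hGint : ∫⁻ y, G y = 1 := by
    rw [hGdef, ← ofReal_integral_eq_lintegral_ofReal hφi (Filter.Eventually.of_forall hφ0),
      hφint, ENNReal.ofReal_one]
  have hφzero : ∀ y : EuclideanSpace ℝ (Fin n), ¬ ‖y‖ ≤ 1 → φ y = 0 := by
    intro y hy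
    by_contra h
    exact hy (by simpa [Metric.mem_closedBall, dist_eq_norm] using hφsupp h)
  -- the map Ψ
  set Ψ : EuclideanSpace ℝ (Fin n) × EuclideanSpace ℝ (Fin n) → EuclideanSpace ℝ (Fin n) :=
    fun q => q.1 - (lam * ρ q.1) • q.2 with hΨdef
  have hΨc : Continuous Ψ := by
    apply Continuous.sub continuous_fst
    exact ((continuous_const.mul (hρ.continuous.comp continuous_fst)).smul continuous_snd)
  set F : EuclideanSpace ℝ (Fin n) × EuclideanSpace ℝ (Fin n) → ℝ≥0∞ :=
    fun q => (‖u' (Ψ q)‖₊ : ℝ≥0∞) with hFdef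
  have hFmeas : Measurable F :=
    (hum.measurable.comp hΨc.measurable).nnnorm.coe_nnreal_ennreal
  -- the L^p integral of u'
  set I : ℝ≥0∞ := ∫⁻ z, (‖u' z‖₊ : ℝ≥0∞) ^ p with hIdef
  have hsnorm' : eLpNorm u' (ENNReal.ofReal p) volume = I ^ (1/p) := by
    show _ = (∫⁻ z, ‖u' z‖ₑ ^ p) ^ (1/p)
    rw [eLpNorm_eq_lintegral_rpow_enorm_toReal hpne hptop, hpto]
  have hIlt : I < ⊤ := by
    have h1 : I ^ (1/p) < ⊤ := hsnorm' ▸ hu'mem.2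
    have h2 : (I ^ (1/p)) ^ p < ⊤ := ENNReal.rpow_lt_top_of_nonneg hp0.le h1.ne
    rwa [← ENNReal.rpow_mul, one_div, inv_mul_cancel₀ hp0.ne', ENNReal.rpow_one] at h2
  -- the crucial product bound
  have hprod_meas : Measurable (fun q : EuclideanSpace ℝ (Fin n) × EuclideanSpace ℝ (Fin n) =>
      F q ^ p * G q.2) := (hFmeas.pow_const p).mul (hGmeas.comp measurable_snd)
  set A : EuclideanSpace ℝ (Fin n) → ℝ≥0∞ := fun x => ∫⁻ y, F (x, y) ^ p * G y with hAdef
  have hAmeas : Measurable A := Measurable.lintegral_prod_right hprod_meas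
  have hslice : ∀ y : EuclideanSpace ℝ (Fin n), ‖y‖ ≤ 1 →
      ∀ g : EuclideanSpace ℝ (Fin n) → ℝ≥0∞,
      ∫⁻ x, g (x - (lam * ρ x) • y) ≤ 2 * ∫⁻ z, g z :=
    fun y hy g => cov_bound hρ hgrad hlam hlamC hy g
  have hkey : ∫⁻ x, A x ≤ 2 * I := by
    rw [hAdef]
    rw [lintegral_lintegral_swap hprod_meas.aemeasurable]
    have h1 : ∀ y : EuclideanSpace ℝ (Fin n),
        ∫⁻ x, F (x, y) ^ p * G y ≤ G y * (2 * I) := by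
      intro y
      rw [show (fun x => F (x, y) ^ p * G y) = fun x => G y * F (x, y) ^ p by
        funext x; rw [mul_comm]]
      rw [lintegral_const_mul' _ _ ENNReal.ofReal_ne_top]
      by_cases hy : ‖y‖ ≤ 1
      · apply mul_le_mul_right
        exact hslice y hy (fun z => (‖u' z‖₊ : ℝ≥0∞) ^ p)
      · simp [hGdef, hφzero y hy]
    calc ∫⁻ y, ∫⁻ x, F (x, y) ^ p * G y ≤ ∫⁻ y, G y * (2 * I) := lintegral_mono h1
      _ = (∫⁻ y, G y) * (2 * I) := lintegral_mul_const' _ _ (by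
          exact ENNReal.mul_ne_top (by norm_num) hIlt.ne)
      _ = 2 * I := by rw [hGint, one_mul]
  have hAfin : ∀ᵐ x : EuclideanSpace ℝ (Fin n), A x < ⊤ :=
    ae_lt_top hAmeas (lt_of_le_of_lt hkey
      (ENNReal.mul_lt_top (by norm_num) hIlt)).ne
  -- where u and u' agree after composition
  have hmx : ∀ x : EuclideanSpace ℝ (Fin n),
      Measurable fun y : EuclideanSpace ℝ (Fin n) => x - (lam * ρ x) • y := by
    intro x
    exact (continuous_const.sub (continuous_id.const_smul (lam * ρ x))).measurable
  have hnull : volume {z | ¬ u z = u' z} = 0 := ae_iff.mp hueq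
  obtain ⟨N', hNsub, hN'meas, hN'0⟩ := exists_measurable_superset_of_null hnull
  have hsec : ∀ y : EuclideanSpace ℝ (Fin n), ‖y‖ ≤ 1 →
      volume {x : EuclideanSpace ℝ (Fin n) | (x - (lam * ρ x) • y) ∈ N'} = 0 := by
    intro y hy
    have h1 := hslice y hy (N'.indicator 1)
    rw [lintegral_indicator_one hN'meas, hN'0, mul_zero] at h1
    have hpre : MeasurableSet ((fun x : EuclideanSpace ℝ (Fin n) =>
        x - (lam * ρ x) • y) ⁻¹' N') := hN'meas.preimage (by
      exact (continuous_id.sub ((continuous_const.mul hρ.continuous).smul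
        continuous_const)).measurable)
    have h2 : ∫⁻ x, N'.indicator 1 (x - (lam * ρ x) • y) =
        volume {x : EuclideanSpace ℝ (Fin n) | (x - (lam * ρ x) • y) ∈ N'} := by
      have h3 : ∀ x : EuclideanSpace ℝ (Fin n),
          N'.indicator (1 : EuclideanSpace ℝ (Fin n) → ℝ≥0∞) (x - (lam * ρ x) • y)
          = ((fun x : EuclideanSpace ℝ (Fin n) =>
              x - (lam * ρ x) • y) ⁻¹' N').indicator 1 x := by
        intro x
        simp [Set.indicator_apply]
      rw [lintegral_congr h3, lintegral_indicator_one hpre]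
      rfl
    rw [← h2]
    exact le_antisymm h1 zero_le
  set T : Set (EuclideanSpace ℝ (Fin n) × EuclideanSpace ℝ (Fin n)) :=
    {q | q.2 ∈ Metric.closedBall (0 : EuclideanSpace ℝ (Fin n)) 1 ∧ Ψ q ∈ N'} with hTdef
  have hTmeas : MeasurableSet T :=
    (measurable_snd measurableSet_closedBall).inter (hΨc.measurable hN'meas)
  have hT0 : (volume.prod volume) T = 0 := by
    rw [Measure.prod_apply_symm hTmeas]
    have : ∀ y : EuclideanSpace ℝ (Fin n),
        volume ((fun x => (x, y)) ⁻¹' T) = 0 := by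
      intro y
      by_cases hy : ‖y‖ ≤ 1
      · have : ((fun x => (x, y)) ⁻¹' T) ⊆
            {x : EuclideanSpace ℝ (Fin n) | (x - (lam * ρ x) • y) ∈ N'} := by
          intro x hx
          exact hx.2
        exact le_antisymm (le_trans (measure_mono this) (le_of_eq (hsec y hy))) zero_le
      · have : ((fun x => (x, y)) ⁻¹' T) = ∅ := by
          ext x
          simp only [Set.mem_preimage, hTdef, Set.mem_setOf_eq, Metric.mem_closedBall,
            dist_zero_right, Set.mem_empty_iff_false, iff_false]
          intro h
          exact hy h.1
        simp [this]
      
    simp [this]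
  have haeT : ∀ᵐ q ∂((volume : Measure (EuclideanSpace ℝ (Fin n))).prod volume), q ∉ T := by
    rw [ae_iff]
    simpa using hT0
  have haesec : ∀ᵐ x : EuclideanSpace ℝ (Fin n), ∀ᵐ y : EuclideanSpace ℝ (Fin n),
      ¬ ((x, y) ∈ T) := Measure.ae_ae_of_ae_prod haeT
  -- a.e. equality of the integrands
  have heqx : ∀ᵐ x : EuclideanSpace ℝ (Fin n),
      (fun y => u (x - (lam * ρ x) • y) * φ y)
        =ᵐ[volume] (fun y => u' (x - (lam * ρ x) • y) * φ y) := by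
    filter_upwards [haesec] with x hx
    filter_upwards [hx] with y hy
    by_cases hφy : φ y = 0
    · simp [hφy]
    · have hyball : y ∈ Metric.closedBall (0 : EuclideanSpace ℝ (Fin n)) 1 :=
        hφsupp hφy
      have hΨN : ¬ ((x - (lam * ρ x) • y) ∈ N') := fun h => hy ⟨hyball, h⟩
      have : u (x - (lam * ρ x) • y) = u' (x - (lam * ρ x) • y) := by
        by_contra h
        exact hΨN (hNsub h)
      rw [this]
  -- pointwise norm computation
  have hnorm_eq : ∀ x : EuclideanSpace ℝ (Fin n),
      ∀ y : EuclideanSpace ℝ (Fin n),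
      (‖u' (x - (lam * ρ x) • y) * φ y‖₊ : ℝ≥0∞) = F (x, y) * G y := by
    intro x y
    rw [nnnorm_mul, ENNReal.coe_mul]
    congr 1
    exact Real.enorm_eq_ofReal (hφ0 y)
  -- Hölder for each x
  have hhold : ∀ x : EuclideanSpace ℝ (Fin n),
      ∫⁻ y, F (x, y) * G y ≤ A x ^ (1/p) := by
    intro x
    apply holder_aux hp _ hGmeas.aemeasurable hGint
    exact ((hum.measurable.comp (hmx x)).nnnorm.coe_nnreal_ennreal).aemeasurable
  -- integrability of the u' version
  have hint' : ∀ᵐ x : EuclideanSpace ℝ (Fin n),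
      Integrable (fun y => u' (x - (lam * ρ x) • y) * φ y) := by
    filter_upwards [hAfin] with x hA
    constructor
    · exact ((hum.measurable.comp (hmx x)).mul hφc.measurable).aestronglyMeasurable
    · show (∫⁻ y, (‖u' (x - (lam * ρ x) • y) * φ y‖₊ : ℝ≥0∞)) < ⊤
      calc ∫⁻ y, (‖u' (x - (lam * ρ x) • y) * φ y‖₊ : ℝ≥0∞)
          = ∫⁻ y, F (x, y) * G y := lintegral_congr (hnorm_eq x)
        _ ≤ A x ^ (1/p) := hhold x
        _ < ⊤ := ENNReal.rpow_lt_top_of_nonneg (by positivity) hA.ne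
  have hint : ∀ᵐ x : EuclideanSpace ℝ (Fin n),
      Integrable (fun y => u (x - (lam * ρ x) • y) * φ y) := by
    filter_upwards [hint', heqx] with x h1 h2
    exact h1.congr h2.symm
  refine ⟨hint, ?_⟩
  -- the norm bound
  have hvbound : ∀ᵐ x : EuclideanSpace ℝ (Fin n), (‖v x‖₊ : ℝ≥0∞) ^ p ≤ A x := by
    filter_upwards [heqx] with x hx
    have h1 : (‖v x‖₊ : ℝ≥0∞) ≤ ∫⁻ y, (‖u (x - (lam * ρ x) • y) * φ y‖₊ : ℝ≥0∞) := by
      rw [hv x]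
      exact enorm_integral_le_lintegral_enorm _
    have h2 : ∫⁻ y, (‖u (x - (lam * ρ x) • y) * φ y‖₊ : ℝ≥0∞) = ∫⁻ y, F (x, y) * G y := by
      have hxe : (fun y => (‖u (x - (lam * ρ x) • y) * φ y‖₊ : ℝ≥0∞))
          =ᵐ[volume] (fun y => (‖u' (x - (lam * ρ x) • y) * φ y‖₊ : ℝ≥0∞)) := by
        filter_upwards [hx] with y hy
        rw [show u (x - (lam * ρ x) • y) * φ y = u' (x - (lam * ρ x) • y) * φ y from hy]
      rw [lintegral_congr_ae hxe]
      exact lintegral_congr (hnorm_eq x)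
    have h3 : (‖v x‖₊ : ℝ≥0∞) ≤ A x ^ (1/p) := le_trans h1 (h2 ▸ hhold x)
    calc (‖v x‖₊ : ℝ≥0∞) ^ p ≤ (A x ^ (1/p)) ^ p := ENNReal.rpow_le_rpow h3 hp0.le
      _ = A x := by
        rw [← ENNReal.rpow_mul, one_div, inv_mul_cancel₀ hp0.ne', ENNReal.rpow_one]
  have hfinal : ∫⁻ x, (‖v x‖₊ : ℝ≥0∞) ^ p ≤ 2 * I :=
    le_trans (lintegral_mono_ae hvbound) hkey
  have hsnv : eLpNorm v (ENNReal.ofReal p) volume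
      = (∫⁻ x, (‖v x‖₊ : ℝ≥0∞) ^ p) ^ (1/p) := by
    show _ = (∫⁻ x, ‖v x‖ₑ ^ p) ^ (1/p)
    rw [eLpNorm_eq_lintegral_rpow_enorm_toReal hpne hptop, hpto]
  rw [hsnv, eLpNorm_congr_ae hueq, hsnorm']
  calc (∫⁻ x, (‖v x‖₊ : ℝ≥0∞) ^ p) ^ (1/p) ≤ (2 * I) ^ (1/p) :=
        ENNReal.rpow_le_rpow hfinal (by positivity)
    _ = 2 ^ (1/p) * I ^ (1/p) := ENNReal.mul_rpow_of_nonneg _ _ (by positivity)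
    _ = ENNReal.ofReal ((2 : ℝ) ^ (1/p)) * I ^ (1/p) := by
        rw [← ENNReal.ofReal_rpow_of_pos (by norm_num : (0:ℝ) < 2)]
        norm_num
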